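/- Let t = 1 − n(b−c)/((n−1)·b) ∈ (0,1). For every k ∈ {1,…,n−2} there exists δ₀ ∈ (0,1) such that for all δ ∈ (δ₀,1): the set {ε ∈ (0,1) : V_k(ε,δ) > W_n(ε,δ)} (equivalently {ε ∈ (0,1) : Δ(ε;k,δ) > t}) is a nonempty open interval (ε̲_k, ε̄_k) with 0 < ε̲_k < ε̄_k < 1. That is, the tolerant conditional cooperative strategy T_k strictly beats a single defector mutant exactly for mistake rates in a band whose lower endpoint is strictly positive. -/

import Mathlib

open Finset

/-- `ψ(j,q,ε) = (j choose q)·ε^q·(1−ε)^(j−q)`. -/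
noncomputable def psi (j q : ℕ) (ε : ℝ) : ℝ :=
  (j.choose q : ℝ) * ε ^ q * (1 - ε) ^ (j - q)

/-- One-shot expected payoff of cooperation against `n−1` error-prone cooperators. -/
noncomputable def FC (n : ℕ) (b c ε : ℝ) : ℝ :=
  (1 - ε) * ∑ q ∈ range n, psi (n - 1) q ε * (b * ((n : ℝ) - q) / n - c) +
    ε * ∑ q ∈ range n, psi (n - 1) q ε * (b * ((n : ℝ) - 1 - q) / n)

/-- One-shot expected payoff of defection against `n−1` error-prone cooperators. -/
noncomputable def FD (n : ℕ) (b ε : ℝ) : ℝ :=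
  ∑ q ∈ range n, psi (n - 1) q ε * (b * ((n : ℝ) - 1 - q) / n)

/-- Repeated-game payoff of the incumbent `T_k` strategy in a `T_k` population. -/
noncomputable def Vk (n k : ℕ) (b c ε δ : ℝ) : ℝ :=
  FC n b c ε /
    (1 - δ * ∑ q ∈ range (n - k - 1), psi (n - 1) q ε -
      δ * (1 - ε) * psi (n - 1) (n - k - 1) ε)

/-- Repeated-game payoff of a single defector (`T_n`) mutant in a `T_k` population. -/
noncomputable def Wn (n k : ℕ) (b ε δ : ℝ) : ℝ :=
  FD n b ε / (1 - δ * ∑ q ∈ range (n - k - 1), psi (n - 1) q ε)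

/-- The continuation factor `Δ(ε;k,δ)`. -/
noncomputable def Delta (n k : ℕ) (ε δ : ℝ) : ℝ :=
  δ * (1 - ε) * psi (n - 1) (n - k - 1) ε /
    (1 - δ * ∑ q ∈ range (n - k - 1), psi (n - 1) q ε)

lemma psi_nonneg {j q : ℕ} {ε : ℝ} (h0 : 0 ≤ ε) (h1 : ε ≤ 1) : 0 ≤ psi j q ε := by
  unfold psi
  have : (0:ℝ) ≤ 1 - ε := by linarith
  positivity

lemma sum_psi_eq_one (N : ℕ) (ε : ℝ) : ∑ q ∈ range (N+1), psi N q ε = 1 := by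
  have h := add_pow ε (1 - ε) N
  simp only [add_sub_cancel, one_pow] at h
  rw [h]
  apply Finset.sum_congr rfl
  intro q _
  unfold psi
  ring

lemma sum_psi_mul_eq (N : ℕ) (ε : ℝ) : ∑ q ∈ range (N+1), psi N q ε * q = N * ε := by
  rcases Nat.eq_zero_or_pos N with h | h
  · subst h; simp [psi]
  obtain ⟨M, rfl⟩ : ∃ M, N = M + 1 := ⟨N - 1, by omega⟩
  rw [Finset.sum_range_succ']
  have key : ∀ q, psi (M+1) (q+1) ε * (q+1) = ((M:ℝ)+1) * ε * psi M q ε := by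
    intro q
    unfold psi
    have hc : ((M+1).choose (q+1) : ℝ) * (q+1) = ((M:ℝ)+1) * (M.choose q : ℝ) := by
      have := Nat.add_one_mul_choose_eq M q
      have := congrArg (Nat.cast (R := ℝ)) this
      push_cast at this
      linarith
    have he : (M + 1) - (q + 1) = M - q := by omega
    rw [he]
    calc ((M+1).choose (q+1) : ℝ) * ε ^ (q+1) * (1-ε) ^ (M-q) * (q+1)
        = (((M+1).choose (q+1) : ℝ) * (q+1)) * (ε ^ (q+1) * (1-ε) ^ (M-q)) := by push_cast; ring
      _ = (((M:ℝ)+1) * (M.choose q : ℝ)) * (ε ^ (q+1) * (1-ε) ^ (M-q)) := by rw [hc]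
      _ = ((M:ℝ)+1) * ε * ((M.choose q : ℝ) * ε ^ q * (1-ε) ^ (M-q)) := by ring
  have : ∑ q ∈ range (M+1), psi (M+1) (q+1) ε * (↑(q+1)) =
      ∑ q ∈ range (M+1), ((M:ℝ)+1) * ε * psi M q ε := by
    apply Finset.sum_congr rfl; intro q _; push_cast; exact key q
  rw [this, ← Finset.mul_sum, sum_psi_eq_one]
  push_cast
  ring

lemma FD_eq (n : ℕ) (hn : 1 ≤ n) (b ε : ℝ) : FD n b ε = b * ((n:ℝ) - 1) * (1 - ε) / n := by
  obtain ⟨N, rfl⟩ : ∃ N, n = N + 1 := ⟨n - 1, by omega⟩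
  unfold FD
  simp only [Nat.add_sub_cancel]
  push_cast
  have : ∀ q ∈ range (N+1), psi N q ε * (b * (((N:ℝ)+1) - 1 - q) / ((N:ℝ)+1)) =
      (b * N / ((N:ℝ)+1)) * psi N q ε - (b / ((N:ℝ)+1)) * (psi N q ε * q) := by
    intro q _
    ring
  rw [Finset.sum_congr rfl this, Finset.sum_sub_distrib, ← Finset.mul_sum, ← Finset.mul_sum,
    sum_psi_eq_one, sum_psi_mul_eq]
  push_cast
  ring

lemma FC_sub_FD (n : ℕ) (hn : 1 ≤ n) (b c ε : ℝ) :
    FC n b c ε - FD n b ε = (1 - ε) * (b / n - c) := by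
  obtain ⟨N, rfl⟩ : ∃ N, n = N + 1 := ⟨n - 1, by omega⟩
  unfold FC FD
  simp only [Nat.add_sub_cancel]
  have hA : ∑ q ∈ range (N+1), psi N q ε * (b * ((↑(N+1):ℝ) - q) / (N+1) - c)
      - ∑ q ∈ range (N+1), psi N q ε * (b * ((↑(N+1):ℝ) - 1 - q) / (N+1))
      = (b / (N+1) - c) := by
    rw [← Finset.sum_sub_distrib]
    have : ∀ q ∈ range (N+1), psi N q ε * (b * ((↑(N+1):ℝ) - q) / (N+1) - c)
        - psi N q ε * (b * ((↑(N+1):ℝ) - 1 - q) / (N+1))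
        = psi N q ε * (b / (N+1) - c) := by
      intro q _
      have h1 : ((N:ℝ)+1) ≠ 0 := by positivity
      field_simp
      ring
    rw [Finset.sum_congr rfl this, ← Finset.sum_mul, sum_psi_eq_one, one_mul]
  push_cast at hA ⊢
  linear_combination (1 - ε) * hA

lemma hasDerivAt_cab (c : ℝ) (a b : ℕ) (x : ℝ) :
    HasDerivAt (fun y => c * y ^ a * (1 - y) ^ b)
      (c * ((a:ℝ) * x ^ (a-1) * (1-x) ^ b - (b:ℝ) * x ^ a * (1-x) ^ (b-1))) x := by
  have h1 : HasDerivAt (fun y : ℝ => y ^ a) ((a:ℝ) * x ^ (a-1)) x := hasDerivAt_pow a x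
  have h2 : HasDerivAt (fun y : ℝ => (1 - y) ^ b) ((b:ℝ) * (1-x) ^ (b-1) * (-1)) x := by
    exact ((hasDerivAt_id x).const_sub 1).pow b
  have := (h1.mul h2).const_mul c
  convert this using 1
  · rfl
  · rfl
  · funext y; simp only [Pi.mul_apply]; ring
  · ring

lemma psi_hasDerivAt (N q : ℕ) (h1 : 1 ≤ q) (h2 : q + 1 ≤ N) (x : ℝ) :
    HasDerivAt (fun y => psi N q y)
      ((N:ℝ) * (psi (N-1) (q-1) x - psi (N-1) q x)) x := by
  have key := hasDerivAt_cab ((N.choose q : ℝ)) q (N - q) x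
  have e1 : (N - 1) - (q - 1) = N - q := by omega
  have e2 : (N - 1) - q = (N - q) - 1 := by omega
  have c1n : N * (N-1).choose (q-1) = N.choose q * q := by
    have h := Nat.add_one_mul_choose_eq (N-1) (q-1)
    simpa [Nat.succ_eq_add_one, show N-1+1=N by omega, show q-1+1=q by omega] using h
  have c2n : N * (N-1).choose q = N.choose q * (N - q) := by
    have ha := Nat.add_one_mul_choose_eq (N-1) q
    have hb := Nat.choose_succ_right_eq N q
    have hN : N - 1 + 1 = N := by omega
    simp only [Nat.succ_eq_add_one, hN] at ha
    omega
  have c1 : (N:ℝ) * ((N-1).choose (q-1) : ℝ) = (N.choose q : ℝ) * q := by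
    exact_mod_cast congrArg (Nat.cast (R := ℝ)) c1n
  have c2 : (N:ℝ) * ((N-1).choose q : ℝ) = (N.choose q : ℝ) * ((N - q : ℕ) : ℝ) := by
    exact_mod_cast congrArg (Nat.cast (R := ℝ)) c2n
  convert key using 1
  · rfl
  unfold psi
  rw [e1, e2]
  linear_combination (x ^ (q-1) * (1-x) ^ (N-q)) * c1 - (x ^ q * (1-x) ^ ((N-q)-1)) * c2

lemma S_hasDerivAt (N : ℕ) : ∀ m : ℕ, 1 ≤ m → m ≤ N → ∀ x : ℝ,
    HasDerivAt (fun y => ∑ q ∈ range m, psi N q y) (-((N:ℝ) * psi (N-1) (m-1) x)) x := by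
  intro m
  induction m with
  | zero => intro h; omega
  | succ m ih =>
    intro _ hmN x
    rcases Nat.eq_zero_or_pos m with hm0 | hm0
    · subst hm0
      have key := hasDerivAt_cab ((N.choose 0 : ℝ)) 0 (N - 0) x
      have : (fun y : ℝ => ∑ q ∈ range 1, psi N q y)
          = fun y => (N.choose 0 : ℝ) * y ^ 0 * (1 - y) ^ (N - 0) := by
        funext y; simp [psi]
      rw [this]
      convert key using 1
      unfold psi
      simp only [Nat.choose_zero_right, Nat.cast_one, Nat.sub_zero, Nat.cast_zero,
        pow_zero, Nat.add_sub_cancel]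
      ring
    · have hd := psi_hasDerivAt N m hm0 hmN x
      have hs := ih hm0 (by omega) x
      have : (fun y : ℝ => ∑ q ∈ range (m+1), psi N q y)
          = fun y => (∑ q ∈ range m, psi N q y) + psi N m y := by
        funext y; rw [Finset.sum_range_succ]
      rw [this]
      have := hs.add hd
      convert this using 1
      · rfl
      · rfl
      · rfl
      have e : m + 1 - 1 = m := by omega
      rw [e]
      ring

lemma choose_id_real (N m : ℕ) (hm1 : 1 ≤ m) (hmN : m ≤ N) :
    (N:ℝ) * ((N-1).choose (m-1) : ℝ) = (N.choose m : ℝ) * m := by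
  have h := Nat.add_one_mul_choose_eq (N-1) (m-1)
  have hn : N * (N-1).choose (m-1) = N.choose m * m := by
    simpa [Nat.succ_eq_add_one, show N-1+1=N by omega, show m-1+1=m by omega] using h
  exact_mod_cast congrArg (Nat.cast (R := ℝ)) hn

lemma g_hasDerivAt (N m : ℕ) (t : ℝ) (hm1 : 1 ≤ m) (hmN : m + 1 ≤ N) (x : ℝ) :
    HasDerivAt (fun y => (1-y) * psi N m y + t * ∑ q ∈ range m, psi N q y)
      ((N.choose m : ℝ) * x^(m-1) * (1-x)^(N-m) * ((m:ℝ)*(1-t) - ((N:ℝ)+1)*x)) x := by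
  have h1 := hasDerivAt_cab ((N.choose m : ℝ)) m (N - m + 1) x
  have hfe : (fun y : ℝ => (1-y) * psi N m y)
      = fun y => (N.choose m : ℝ) * y ^ m * (1 - y) ^ (N - m + 1) := by
    funext y; unfold psi; rw [pow_succ]; ring
  have hS := (S_hasDerivAt N m hm1 (by omega) x).const_mul t
  rw [← hfe] at h1
  have := h1.add hS
  convert this using 1
  · rfl
  · rfl
  · rfl
  have e1 : (N - m + 1) - 1 = N - m := by omega
  rw [e1]
  have c1 := choose_id_real N m hm1 (by omega)
  have hx : x ^ m = x ^ (m-1) * x := by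
    rw [← pow_succ]; congr 1; omega
  have hy : (1-x) ^ (N - m + 1) = (1-x) ^ (N-m) * (1-x) := by
    rw [← pow_succ]
  have hpsi : psi (N-1) (m-1) x = ((N-1).choose (m-1) : ℝ) * x ^ (m-1) * (1-x) ^ (N-m) := by
    unfold psi
    congr 2
    omega
  rw [hx, hy, hpsi]
  have hcast : ((N - m + 1 : ℕ) : ℝ) = (N:ℝ) - (m:ℝ) + 1 := by
    push_cast [Nat.cast_sub (by omega : m ≤ N)]; ring
  rw [hcast]
  linear_combination (t * x^(m-1) * (1-x)^(N-m)) * c1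

noncomputable def gf (N m : ℕ) (t : ℝ) : ℝ → ℝ :=
  fun y => (1 - y) * psi N m y + t * ∑ q ∈ range m, psi N q y

lemma gf_hasDerivAt (N m : ℕ) (t : ℝ) (hm1 : 1 ≤ m) (hmN : m + 1 ≤ N) (x : ℝ) :
    HasDerivAt (gf N m t)
      ((N.choose m : ℝ) * x^(m-1) * (1-x)^(N-m) * ((m:ℝ)*(1-t) - ((N:ℝ)+1)*x)) x :=
  g_hasDerivAt N m t hm1 hmN x

lemma gf_cont (N m : ℕ) (t : ℝ) (hm1 : 1 ≤ m) (hmN : m + 1 ≤ N) :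
    Continuous (gf N m t) := by
  rw [continuous_iff_continuousAt]
  intro x
  exact (gf_hasDerivAt N m t hm1 hmN x).differentiableAt.continuousAt

lemma gf_zero (N m : ℕ) (t : ℝ) (hm1 : 1 ≤ m) : gf N m t 0 = t := by
  unfold gf
  have h1 : psi N m 0 = 0 := by
    unfold psi
    rw [zero_pow (by omega : m ≠ 0)]
    ring
  have h2 : ∑ q ∈ range m, psi N q 0 = 1 := by
    rw [Finset.sum_eq_single 0]
    · unfold psi; simp
    · intro q _ hq
      unfold psi
      rw [zero_pow hq]
      ring
    · intro h; exact absurd (Finset.mem_range.mpr (by omega)) h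
  rw [h1, h2]
  ring

lemma gf_one (N m : ℕ) (t : ℝ) (hmN : m + 1 ≤ N) : gf N m t 1 = 0 := by
  unfold gf
  have h2 : ∑ q ∈ range m, psi N q 1 = 0 := by
    apply Finset.sum_eq_zero
    intro q hq
    unfold psi
    rw [Finset.mem_range] at hq
    rw [show (1:ℝ) - 1 = 0 by ring, zero_pow (by omega : N - q ≠ 0)]
    ring
  rw [h2]
  ring

lemma gf_strictMonoOn (N m : ℕ) (t : ℝ) (hm1 : 1 ≤ m) (hmN : m + 1 ≤ N)
    (ht0 : 0 < t) (ht1 : t < 1) :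
    StrictMonoOn (gf N m t) (Set.Icc 0 ((m:ℝ)*(1-t)/((N:ℝ)+1))) := by
  set xs := (m:ℝ)*(1-t)/((N:ℝ)+1) with hxs
  have hxs1 : xs < 1 := by
    rw [hxs, div_lt_one (by positivity)]
    have hmn : (m:ℝ) ≤ (N:ℝ) := by exact_mod_cast Nat.le_of_succ_le hmN
    nlinarith
  apply strictMonoOn_of_deriv_pos (convex_Icc _ _)
    ((gf_cont N m t hm1 hmN).continuousOn)
  intro x hx
  rw [interior_Icc, Set.mem_Ioo] at hx
  rw [(gf_hasDerivAt N m t hm1 hmN x).deriv]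
  have hC : (0:ℝ) < (N.choose m : ℝ) := by
    exact_mod_cast Nat.choose_pos (by omega : m ≤ N)
  have hx1 : x < 1 := lt_trans hx.2 hxs1
  have hlast : 0 < (m:ℝ)*(1-t) - ((N:ℝ)+1)*x := by
    have := hx.2
    rw [hxs, lt_div_iff₀ (by positivity : (0:ℝ) < (N:ℝ)+1)] at this
    nlinarith
  have hx0 := hx.1
  have h1x : 0 < 1 - x := by linarith
  exact mul_pos (mul_pos (mul_pos hC (pow_pos hx0 _)) (pow_pos h1x _)) hlast

lemma gf_strictAntiOn (N m : ℕ) (t : ℝ) (hm1 : 1 ≤ m) (hmN : m + 1 ≤ N)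
    (ht0 : 0 < t) (ht1 : t < 1) :
    StrictAntiOn (gf N m t) (Set.Icc ((m:ℝ)*(1-t)/((N:ℝ)+1)) 1) := by
  set xs := (m:ℝ)*(1-t)/((N:ℝ)+1) with hxs
  have hxs0 : 0 < xs := by
    rw [hxs]
    have hm' : (0:ℝ) < (m:ℝ) := by exact_mod_cast hm1
    have h1t : (0:ℝ) < 1 - t := by linarith
    exact div_pos (mul_pos hm' h1t) (by positivity)
  apply strictAntiOn_of_deriv_neg (convex_Icc _ _)
    ((gf_cont N m t hm1 hmN).continuousOn)
  intro x hx
  rw [interior_Icc, Set.mem_Ioo] at hx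
  rw [(gf_hasDerivAt N m t hm1 hmN x).deriv]
  have hC : (0:ℝ) < (N.choose m : ℝ) := by
    exact_mod_cast Nat.choose_pos (by omega : m ≤ N)
  have hx0 : 0 < x := lt_trans hxs0 hx.1
  have hlast : (m:ℝ)*(1-t) - ((N:ℝ)+1)*x < 0 := by
    have := hx.1
    rw [hxs, div_lt_iff₀ (by positivity : (0:ℝ) < (N:ℝ)+1)] at this
    nlinarith
  have h1x : 0 < 1 - x := by linarith [hx.2]
  have hpos : 0 < (N.choose m : ℝ) * x^(m-1) * (1-x)^(N-m) :=
    mul_pos (mul_pos hC (pow_pos hx0 _)) (pow_pos h1x _)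
  exact mul_neg_of_pos_of_neg hpos hlast

lemma t_facts (n : ℕ) (hn : 3 ≤ n) (b c : ℝ)
    (hb0 : 0 < b / n) (hbc : b / n < c) (hcb : c < b) :
    0 < 1 - n * (b - c) / (((n : ℝ) - 1) * b) ∧
      1 - n * (b - c) / (((n : ℝ) - 1) * b) < 1 := by
  have hn0 : (0:ℝ) < n := by positivity
  have hn1 : (1:ℝ) < n := by exact_mod_cast (by omega : 1 < n)
  have hb : 0 < b := by
    have := mul_pos hb0 hn0
    rwa [div_mul_cancel₀ _ (ne_of_gt hn0)] at this
  have hnc : b < c * n := by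
    rw [div_lt_iff₀ hn0] at hbc
    exact hbc
  have hne1 : ((n:ℝ) - 1) ≠ 0 := by linarith
  have hne2 : b ≠ 0 := ne_of_gt hb
  have halt : 1 - (n:ℝ) * (b - c) / (((n:ℝ) - 1) * b)
      = ((n:ℝ) * c - b) / (((n:ℝ) - 1) * b) := by
    field_simp
    ring
  constructor
  · rw [halt]
    apply div_pos (by nlinarith) (by nlinarith)
  · rw [halt, div_lt_one (by nlinarith)]
    nlinarith

lemma equiv_lemma (n k : ℕ) (hn : 3 ≤ n) (hk1 : 1 ≤ k) (hk2 : k ≤ n - 2) (b c : ℝ)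
    (hb0 : 0 < b / n) (hbc : b / n < c) (hcb : c < b) (t : ℝ)
    (ht : t = 1 - n * (b - c) / (((n : ℝ) - 1) * b)) (δ ε : ℝ)
    (hδ0 : 0 < δ) (hδ1 : δ < 1) (hε0 : 0 < ε) (hε1 : ε < 1) :
    ((Wn n k b ε δ < Vk n k b c ε δ) ↔ t / δ < gf (n-1) (n-k-1) t ε) ∧
    ((t < Delta n k ε δ) ↔ t / δ < gf (n-1) (n-k-1) t ε) := by
  have hn0 : (0:ℝ) < n := by positivity
  have hn1 : (1:ℝ) < n := by exact_mod_cast (by omega : 1 < n)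
  have hb : 0 < b := by
    have := mul_pos hb0 hn0
    rwa [div_mul_cancel₀ _ (ne_of_gt hn0)] at this
  set S := ∑ q ∈ range (n - k - 1), psi (n - 1) q ε with hS
  set P := psi (n - 1) (n - k - 1) ε with hP
  have hP0 : 0 ≤ P := psi_nonneg hε0.le hε1.le
  have hS0 : 0 ≤ S := Finset.sum_nonneg fun q _ => psi_nonneg hε0.le hε1.le
  have hSP : S + P ≤ 1 := by
    have hfull := sum_psi_eq_one (n-1) ε
    have hsub : ∑ q ∈ range ((n-k-1)+1), psi (n-1) q ε
        ≤ ∑ q ∈ range ((n-1)+1), psi (n-1) q ε := by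
      apply Finset.sum_le_sum_of_subset_of_nonneg
      · exact Finset.range_subset_range.mpr (by omega)
      · intro i _ _
        exact psi_nonneg hε0.le hε1.le
    rw [Finset.sum_range_succ, hfull] at hsub
    rw [hS, hP]
    exact hsub
  have hu : 0 < 1 - ε := by linarith
  have hD1 : 0 < 1 - δ * S := by nlinarith
  have hD2 : 0 < 1 - δ * S - δ * (1 - ε) * P := by
    nlinarith [mul_nonneg (mul_nonneg hδ0.le hε0.le) hP0,
      mul_le_mul_of_nonneg_left hSP hδ0.le]
  have hgf : gf (n-1) (n-k-1) t ε = (1 - ε) * P + t * S := rfl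
  have hmid : (t * (1 - δ * S) < δ * (1 - ε) * P) ↔ t / δ < gf (n-1) (n-k-1) t ε := by
    rw [hgf, div_lt_iff₀ hδ0]
    constructor <;> intro h <;> nlinarith
  constructor
  · unfold Wn Vk
    rw [← hS, ← hP, div_lt_div_iff₀ hD1 hD2, ← hmid]
    have hFD := FD_eq n (by omega) b ε
    have hFC : FC n b c ε = FD n b ε + (1 - ε) * (b / n - c) := by
      linarith [FC_sub_FD n (by omega) b c ε]
    have hne0 : (n:ℝ) ≠ 0 := ne_of_gt hn0
    have hne1 : ((n:ℝ) - 1) ≠ 0 := by linarith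
    have hne2 : b ≠ 0 := ne_of_gt hb
    have hcb2 : c - b / n = t * (b * ((n:ℝ) - 1) / n) := by
      rw [ht]
      field_simp
      ring
    have heq : FC n b c ε * (1 - δ * S) - FD n b ε * (1 - δ * S - δ * (1 - ε) * P)
        = (1 - ε) * (b * ((n:ℝ) - 1) / n) * (δ * (1 - ε) * P - t * (1 - δ * S)) := by
      rw [hFC, hFD]
      linear_combination (-(1 - ε) * (1 - δ * S)) * hcb2
    have hB : 0 < b * ((n:ℝ) - 1) / n := by
      apply div_pos (by nlinarith) hn0
    have hA : 0 < (1 - ε) * (b * ((n:ℝ) - 1) / n) := mul_pos hu hB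
    constructor
    · intro h
      have h2 : 0 < (1 - ε) * (b * ((n:ℝ) - 1) / n)
          * (δ * (1 - ε) * P - t * (1 - δ * S)) := by
        rw [← heq]; linarith
      rcases mul_pos_iff.mp h2 with ⟨_, hX⟩ | ⟨hA', _⟩
      · linarith
      · linarith
    · intro h
      have hX : 0 < δ * (1 - ε) * P - t * (1 - δ * S) := by linarith
      have h2 := mul_pos hA hX
      rw [← heq] at h2
      linarith
  · unfold Delta
    rw [← hS, ← hP, lt_div_iff₀ hD1, ← hmid]

/-- Let `t = 1 − n(b−c)/((n−1)b) ∈ (0,1)`.  For every `k ∈ {1,…,n−2}` there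
exists `δ₀ ∈ (0,1)` such that for all `δ ∈ (δ₀,1)` the set
`{ε ∈ (0,1) : V_k(ε,δ) > W_n(ε,δ)}` (equivalently `{ε ∈ (0,1) : Δ(ε;k,δ) > t}`)
is a nonempty open interval `(ε̲, ε̄)` with `0 < ε̲ < ε̄ < 1`. -/
theorem Tk_stability_band (n : ℕ) (hn : 3 ≤ n) (b c : ℝ)
    (hb0 : 0 < b / n) (hbc : b / n < c) (hcb : c < b)
    (k : ℕ) (hk1 : 1 ≤ k) (hk2 : k ≤ n - 2) :
    ∃ δ₀ : ℝ, 0 < δ₀ ∧ δ₀ < 1 ∧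
      ∀ δ : ℝ, δ₀ < δ → δ < 1 →
        ∃ εlo εhi : ℝ, 0 < εlo ∧ εlo < εhi ∧ εhi < 1 ∧
          {ε : ℝ | ε ∈ Set.Ioo (0 : ℝ) 1 ∧ Vk n k b c ε δ > Wn n k b ε δ} =
            Set.Ioo εlo εhi ∧
          {ε : ℝ | ε ∈ Set.Ioo (0 : ℝ) 1 ∧
              Delta n k ε δ > 1 - n * (b - c) / (((n : ℝ) - 1) * b)} =
            Set.Ioo εlo εhi := by
  obtain ⟨ht0, ht1⟩ := t_facts n hn b c hb0 hbc hcb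
  set t : ℝ := 1 - n * (b - c) / (((n : ℝ) - 1) * b) with htdef
  have hm1 : 1 ≤ n - k - 1 := by omega
  have hmN : (n - k - 1) + 1 ≤ n - 1 := by omega
  set N := n - 1 with hN
  set m := n - k - 1 with hm
  set xs := (m:ℝ)*(1-t)/((N:ℝ)+1) with hxs
  have hxs0 : 0 < xs := by
    rw [hxs]
    exact div_pos (mul_pos (by exact_mod_cast hm1) (by linarith)) (by positivity)
  have hxs1 : xs < 1 := by
    rw [hxs, div_lt_one (by positivity)]
    have hmn : (m:ℝ) ≤ (N:ℝ) := by exact_mod_cast (by omega : m ≤ N)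
    nlinarith
  have hmono := gf_strictMonoOn N m t hm1 hmN ht0 ht1
  have hanti := gf_strictAntiOn N m t hm1 hmN ht0 ht1
  have hcont := gf_cont N m t hm1 hmN
  have hg0 : gf N m t 0 = t := gf_zero N m t hm1
  have hg1 : gf N m t 1 = 0 := gf_one N m t hmN
  have hgxs : t < gf N m t xs := by
    have h := hmono ⟨le_refl 0, hxs0.le⟩ ⟨hxs0.le, le_refl xs⟩ hxs0
    rwa [hg0] at h
  have hgpos : 0 < gf N m t xs := lt_trans ht0 hgxs
  refine ⟨t / gf N m t xs, div_pos ht0 hgpos, (div_lt_one hgpos).mpr hgxs, ?_⟩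
  intro δ hδlo hδhi
  have hδ0 : 0 < δ := lt_trans (div_pos ht0 hgpos) hδlo
  set s := t / δ with hsdef
  have hst : t < s := by
    rw [hsdef, lt_div_iff₀ hδ0]
    nlinarith
  have hsg : s < gf N m t xs := by
    rw [hsdef, div_lt_iff₀ hδ0]
    have := (div_lt_iff₀ hgpos).mp hδlo
    nlinarith
  obtain ⟨εlo, hεlo_mem, hεlo⟩ : ∃ x ∈ Set.Ioo (0:ℝ) xs, gf N m t x = s := by
    have h := intermediate_value_Ioo hxs0.le hcont.continuousOn
    have hmem : s ∈ Set.Ioo (gf N m t 0) (gf N m t xs) := by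
      rw [hg0]; exact ⟨hst, hsg⟩
    obtain ⟨x, hx, hx2⟩ := h hmem
    exact ⟨x, hx, hx2⟩
  obtain ⟨εhi, hεhi_mem, hεhi⟩ : ∃ x ∈ Set.Ioo xs (1:ℝ), gf N m t x = s := by
    have h := intermediate_value_Ioo' hxs1.le hcont.continuousOn
    have hmem : s ∈ Set.Ioo (gf N m t 1) (gf N m t xs) := by
      rw [hg1]; exact ⟨by linarith, hsg⟩
    obtain ⟨x, hx, hx2⟩ := h hmem
    exact ⟨x, hx, hx2⟩
  have hset : {ε : ℝ | ε ∈ Set.Ioo (0:ℝ) 1 ∧ s < gf N m t ε} = Set.Ioo εlo εhi := by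
    ext ε
    simp only [Set.mem_setOf_eq, Set.mem_Ioo]
    constructor
    · rintro ⟨⟨hε0, hε1⟩, hgε⟩
      constructor
      · by_contra hle
        push_neg at hle
        have h2 : gf N m t ε ≤ gf N m t εlo :=
          hmono.monotoneOn ⟨hε0.le, le_trans hle hεlo_mem.2.le⟩
            ⟨hεlo_mem.1.le, hεlo_mem.2.le⟩ hle
        rw [hεlo] at h2; linarith
      · by_contra hle
        push_neg at hle
        have h2 : gf N m t ε ≤ gf N m t εhi :=
          hanti.antitoneOn ⟨hεhi_mem.1.le, hεhi_mem.2.le⟩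
            ⟨le_trans hεhi_mem.1.le hle, hε1.le⟩ hle
        rw [hεhi] at h2; linarith
    · rintro ⟨h1, h2⟩
      have hε0 : 0 < ε := lt_trans hεlo_mem.1 h1
      have hε1 : ε < 1 := lt_trans h2 hεhi_mem.2
      refine ⟨⟨hε0, hε1⟩, ?_⟩
      rcases le_or_gt ε xs with hc | hc
      · have h3 : gf N m t εlo < gf N m t ε :=
          hmono ⟨hεlo_mem.1.le, hεlo_mem.2.le⟩ ⟨hε0.le, hc⟩ h1
        rw [hεlo] at h3; exact h3
      · have h3 : gf N m t εhi < gf N m t ε :=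
          hanti ⟨hc.le, hε1.le⟩ ⟨le_trans hc.le h2.le, hεhi_mem.2.le⟩ h2
        rw [hεhi] at h3; exact h3
  refine ⟨εlo, εhi, hεlo_mem.1, lt_trans hεlo_mem.2 hεhi_mem.1, hεhi_mem.2, ?_, ?_⟩
  · rw [← hset]
    ext ε
    simp only [Set.mem_setOf_eq, gt_iff_lt]
    constructor
    · rintro ⟨hε, h⟩
      exact ⟨hε, ((equiv_lemma n k hn hk1 hk2 b c hb0 hbc hcb t htdef δ ε hδ0 hδhi
        hε.1 hε.2).1).mp h⟩
    · rintro ⟨hε, h⟩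
      exact ⟨hε, ((equiv_lemma n k hn hk1 hk2 b c hb0 hbc hcb t htdef δ ε hδ0 hδhi
        hε.1 hε.2).1).mpr h⟩
  · rw [← hset]
    ext ε
    simp only [Set.mem_setOf_eq, gt_iff_lt]
    constructor
    · rintro ⟨hε, h⟩
      exact ⟨hε, ((equiv_lemma n k hn hk1 hk2 b c hb0 hbc hcb t htdef δ ε hδ0 hδhi
        hε.1 hε.2).2).mp h⟩
    · rintro ⟨hε, h⟩
      exact ⟨hε, ((equiv_lemma n k hn hk1 hk2 b c hb0 hbc hcb t htdef δ ε hδ0 hδhi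
        hε.1 hε.2).2).mpr h⟩
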